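/- Let Φ : ℝ^N → ℝ satisfy (λ|A| − 1)₊ ≤ Φ(A) ≤ Λ|A| + 1 for all A ∈ ℝ^N, where 0 < λ ≤ Λ. For ε > 0 set B_ε := {A ∈ ℝ^N : (Φ + ε|·|²)**(A) = Φ(A) + ε|A|²}. Then for all 0 < ε₁ ≤ ε₂ one has B_{ε₁} ⊆ B_{ε₂}. -/

import Mathlib

/-- The convex envelope (convexification) `Φ**` of `Φ`: the pointwise supremum
of all convex functions lying below `Φ`. -/
noncomputable def convexEnvelope {N : ℕ}
    (Φ : EuclideanSpace ℝ (Fin N) → ℝ) (A : EuclideanSpace ℝ (Fin N)) : ℝ :=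
  sSup {y : ℝ | ∃ g : EuclideanSpace ℝ (Fin N) → ℝ,
    ConvexOn ℝ Set.univ g ∧ (∀ z, g z ≤ Φ z) ∧ y = g A}

lemma convexOn_norm_sq {N : ℕ} :
    ConvexOn ℝ Set.univ (fun z : EuclideanSpace ℝ (Fin N) => ‖z‖ ^ 2) := by
  refine ⟨convex_univ, fun x _ y _ a b ha hb hab => ?_⟩
  simp only [smul_eq_mul]
  have h1 : ‖a • x + b • y‖ ≤ a * ‖x‖ + b * ‖y‖ := by
    calc ‖a • x + b • y‖ ≤ ‖a • x‖ + ‖b • y‖ := norm_add_le _ _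
    _ = a * ‖x‖ + b * ‖y‖ := by rw [norm_smul, norm_smul, Real.norm_of_nonneg ha,
        Real.norm_of_nonneg hb]
  have h2 : ‖a • x + b • y‖ ^ 2 ≤ (a * ‖x‖ + b * ‖y‖) ^ 2 := by
    have := norm_nonneg (a • x + b • y)
    nlinarith
  nlinarith [sq_nonneg (‖x‖ - ‖y‖), mul_nonneg ha hb, norm_nonneg x, norm_nonneg y]

/-- The contact sets `B_ε = {(Φ + ε|·|²)** = Φ + ε|·|²}` are monotone in `ε`:
for `0 < ε₁ ≤ ε₂` one has `B_{ε₁} ⊆ B_{ε₂}`. -/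
theorem contactSet_monotone {N : ℕ} (lam Lam : ℝ)
    (hlam : 0 < lam) (hlL : lam ≤ Lam)
    (Φ : EuclideanSpace ℝ (Fin N) → ℝ)
    (hlow : ∀ A, max (lam * ‖A‖ - 1) 0 ≤ Φ A)
    (hup : ∀ A, Φ A ≤ Lam * ‖A‖ + 1)
    (ε₁ ε₂ : ℝ) (hε₁ : 0 < ε₁) (h₁₂ : ε₁ ≤ ε₂) :
    {A : EuclideanSpace ℝ (Fin N) |
        convexEnvelope (fun B => Φ B + ε₁ * ‖B‖ ^ 2) A = Φ A + ε₁ * ‖A‖ ^ 2} ⊆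
      {A : EuclideanSpace ℝ (Fin N) |
        convexEnvelope (fun B => Φ B + ε₂ * ‖B‖ ^ 2) A = Φ A + ε₂ * ‖A‖ ^ 2} := by
  intro A hA
  simp only [Set.mem_setOf_eq] at hA ⊢
  set δ := ε₂ - ε₁ with hδdef
  have hδ : 0 ≤ δ := by simp [hδdef]; linarith
  have hΦ0 : ∀ z, 0 ≤ Φ z := fun z => le_trans (le_max_right _ _) (hlow z)
  set S₂ : Set ℝ := {y : ℝ | ∃ g : EuclideanSpace ℝ (Fin N) → ℝ,
    ConvexOn ℝ Set.univ g ∧ (∀ z, g z ≤ Φ z + ε₂ * ‖z‖ ^ 2) ∧ y = g A} with hS₂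
  have hub : ∀ y ∈ S₂, y ≤ Φ A + ε₂ * ‖A‖ ^ 2 := by
    rintro y ⟨g, hg, hle, rfl⟩; exact hle A
  have hbdd : BddAbove S₂ := ⟨Φ A + ε₂ * ‖A‖ ^ 2, hub⟩
  -- for each admissible g for ε₁, shifted g is admissible for ε₂
  have key : ∀ y ∈ {y : ℝ | ∃ g : EuclideanSpace ℝ (Fin N) → ℝ,
      ConvexOn ℝ Set.univ g ∧ (∀ z, g z ≤ Φ z + ε₁ * ‖z‖ ^ 2) ∧ y = g A},
      y + δ * ‖A‖ ^ 2 ∈ S₂ := by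
    rintro y ⟨g, hg, hle, rfl⟩
    refine ⟨fun z => g z + δ * ‖z‖ ^ 2, ?_, fun z => ?_, rfl⟩
    · have := hg.add ((convexOn_norm_sq (N := N)).smul hδ)
      exact this
    · have h0 := hle z
      have hz : (0:ℝ) ≤ ‖z‖ ^ 2 := by positivity
      have hδz : δ * ‖z‖ ^ 2 = ε₂ * ‖z‖ ^ 2 - ε₁ * ‖z‖ ^ 2 := by rw [hδdef]; ring
      show g z + δ * ‖z‖ ^ 2 ≤ Φ z + ε₂ * ‖z‖ ^ 2
      linarith
  have hmem0 : (0:ℝ) + δ * ‖A‖ ^ 2 ∈ S₂ := by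
    refine key 0 ⟨fun _ => 0, convexOn_const 0 convex_univ, fun z => ?_, rfl⟩
    show (0:ℝ) ≤ Φ z + ε₁ * ‖z‖ ^ 2
    have : (0:ℝ) ≤ ε₁ * ‖z‖ ^ 2 := by positivity
    linarith [hΦ0 z]
  have hS₂pos : δ * ‖A‖ ^ 2 ≤ sSup S₂ := by
    simpa using le_csSup hbdd hmem0
  apply le_antisymm
  · refine Real.sSup_le hub ?_
    have : (0:ℝ) ≤ ε₂ * ‖A‖ ^ 2 := mul_nonneg (by linarith) (by positivity)
    linarith [hΦ0 A]
  · have h1 : convexEnvelope (fun B => Φ B + ε₁ * ‖B‖ ^ 2) A ≤ sSup S₂ - δ * ‖A‖ ^ 2 := by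
      apply Real.sSup_le
      · intro y hy
        have := le_csSup hbdd (key y hy)
        linarith
      · linarith
    have : Φ A + ε₁ * ‖A‖ ^ 2 ≤ sSup S₂ - δ * ‖A‖ ^ 2 := hA ▸ h1
    have hE : convexEnvelope (fun B => Φ B + ε₂ * ‖B‖ ^ 2) A = sSup S₂ := rfl
    rw [hE]
    have hδA : δ * ‖A‖ ^ 2 = ε₂ * ‖A‖ ^ 2 - ε₁ * ‖A‖ ^ 2 := by rw [hδdef]; ring
    linarith
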